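/- arXiv:1706.05439 — 3 statements merged into one kernel-verified Lean document; each statement's English description precedes it below -/
import Mathlib

section
/- Let A, B, C be non-negative real numbers with A ∈ (0,1), and let (x_k)_{k≥0} be a sequence of non-negative reals satisfying x_{k+1}² ≤ ((1-A)x_k + C)² + B² for every integer k ≥ 0. Then for all integers k ≥ 0, x_k ≤ (1-A)^k x_0 + C/A + B²/(C + √A · B). -/
set_option maxHeartbeats 1000000 in
/-- Dalalyan's recursion lemma: if x_{k+1}² ≤ ((1-A)x_k + C)² + B², then
x_k ≤ (1-A)^k x_0 + C/A + B²/(C + √A·B). -/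
theorem stmt1 (A B C : ℝ) (hA : A ∈ Set.Ioo (0 : ℝ) 1) (hB : 0 ≤ B) (hC : 0 ≤ C)
    (x : ℕ → ℝ) (hx : ∀ k, 0 ≤ x k)
    (hrec : ∀ k : ℕ, (x (k + 1)) ^ 2 ≤ ((1 - A) * x k + C) ^ 2 + B ^ 2) :
    ∀ k : ℕ, x k ≤ (1 - A) ^ k * x 0 + C / A + B ^ 2 / (C + Real.sqrt A * B) := by
  obtain ⟨hA0, hA1⟩ := hA
  have hr0 : 0 < Real.sqrt A := Real.sqrt_pos.mpr hA0
  have hr2 : Real.sqrt A ^ 2 = A := Real.sq_sqrt hA0.le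
  obtain ⟨r, hrdef⟩ : ∃ r : ℝ, r = Real.sqrt A := ⟨_, rfl⟩
  rw [← hrdef] at hr0 hr2 ⊢
  obtain ⟨D, hDdef⟩ : ∃ D : ℝ, D = C / A + B ^ 2 / (C + r * B) := ⟨_, rfl⟩
  obtain ⟨E, hEdef⟩ : ∃ E : ℝ, E = A * B ^ 2 / (C + r * B) := ⟨_, rfl⟩
  have hs0 : 0 ≤ C + r * B := by positivity
  have hE0 : 0 ≤ E := by rw [hEdef]; positivity
  have hD0 : 0 ≤ D := by rw [hDdef]; positivity
  -- A * D = C + E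
  have hAD : A * D = C + E := by
    rcases eq_or_lt_of_le hs0 with hs | hs
    · have hB0 : B = 0 := by nlinarith
      have hC0 : C = 0 := by nlinarith
      simp [hDdef, hEdef, hB0, hC0]
    · rw [hDdef, hEdef]
      field_simp
  -- key : B^2 ≤ 2 D E - E^2
  have hkey : B ^ 2 ≤ 2 * D * E - E ^ 2 := by
    rcases eq_or_lt_of_le hB with hB0 | hB0
    · simp [hEdef, ← hB0]
    · have hs : 0 < C + r * B := by positivity
      have hDval : D = (C * (C + r * B) + A * B ^ 2) / (A * (C + r * B)) := by
        rw [hDdef]; field_simp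
      have hEq : 2 * D * E - E ^ 2 - B ^ 2
          = B ^ 2 * (C ^ 2 + A * B ^ 2 - A ^ 2 * B ^ 2) / (C + r * B) ^ 2 := by
        rw [hDval, hEdef]
        rw [← hr2]
        field_simp
        ring
      have hnn : (0:ℝ) ≤ C ^ 2 + A * B ^ 2 - A ^ 2 * B ^ 2 := by
        nlinarith [mul_nonneg (mul_nonneg hA0.le (by linarith : (0:ℝ) ≤ 1 - A)) (sq_nonneg B), sq_nonneg C]
      have := div_nonneg (mul_nonneg (sq_nonneg B) hnn) (sq_nonneg (C + r * B))
      linarith [hEq]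
  -- induction
  intro k
  induction k with
  | zero =>
      simp only [pow_zero, one_mul]
      have h1 : 0 ≤ C / A := div_nonneg hC hA0.le
      have h2 : 0 ≤ B ^ 2 / (C + r * B) := div_nonneg (sq_nonneg B) hs0
      linarith
  | succ k ih =>
      obtain ⟨t, htdef⟩ : ∃ t : ℝ, t = (1 - A) ^ k * x 0 := ⟨_, rfl⟩
      rw [← htdef] at ih
      have ht0 : 0 ≤ t := htdef ▸ mul_nonneg (pow_nonneg (by linarith) k) (hx 0)
      have h1A : (0:ℝ) ≤ 1 - A := by linarith
      have hxk : x k ≤ t + D := by rw [hDdef]; linarith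
      obtain ⟨u, hudef⟩ : ∃ u : ℝ, u = (1 - A) * (t + D) + C := ⟨_, rfl⟩
      have hu : (1 - A) * x k + C ≤ u := by
        rw [hudef]; nlinarith [mul_le_mul_of_nonneg_left hxk h1A]
      have hu0 : 0 ≤ (1 - A) * x k + C := by
        have := mul_nonneg h1A (hx k); linarith
      have huD : D - E ≤ u := by
        rw [hudef]; nlinarith [mul_nonneg h1A ht0]
      have h2 : x (k + 1) ^ 2 ≤ u ^ 2 + B ^ 2 := by
        have h := pow_le_pow_left₀ hu0 hu 2
        linarith [hrec k]
      have h3 : u ^ 2 + B ^ 2 ≤ (u + E) ^ 2 := by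
        have h := mul_le_mul_of_nonneg_right huD hE0
        nlinarith [h]
      have huE0 : 0 ≤ u + E := by linarith
      have h4 : x (k + 1) ≤ u + E :=
        le_of_pow_le_pow_left₀ two_ne_zero huE0 (le_trans h2 h3)
      have h5 : u + E = (1 - A) * t + D := by
        rw [hudef]; linarith [hAD]
      have h6 : (1 - A) ^ (k + 1) * x 0 = (1 - A) * t := by
        rw [htdef, pow_succ]; ring
      rw [hDdef] at h5
      have h7 : x (k + 1) ≤ (1 - A) * t + (C / A + B ^ 2 / (C + r * B)) := h5 ▸ h4
      rw [h6]
      linarith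
end

section
/- Under the Lipschitz assumption on each ∇f_i, the control-variate gradient noise ξ := ∇f̃(θ) - ∇f(θ) with sampling probabilities p_i = L_i / Σ_j L_j satisfies E‖ξ‖² ≤ (Σ_{i=1}^N L_i)² / n · ‖θ - θ̂‖² for every fixed θ, θ̂ ∈ R^d. -/
open MeasureTheory ProbabilityTheory
open scoped BigOperators

private lemma apply_sum_smul {d N : ℕ} (p : Fin N → ℝ) (c : Fin N → EuclideanSpace ℝ (Fin d))
    (t : Fin d) : (∑ i, p i • c i) t = ∑ i, p i * c i t := by
  simp [WithLp.ofLp_sum, Finset.sum_apply]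

/-- Variance bound for the control-variate gradient estimate with importance
probabilities pᵢ = Lᵢ/Σⱼ Lⱼ: E‖ξ‖² ≤ (Σᵢ Lᵢ)²/n · ‖θ - θ̂‖². -/
theorem stmt2 (d N n : ℕ) (hN : 0 < N) (hn : 0 < n)
    (L : Fin N → ℝ) (hL : ∀ i, 0 < L i)
    (g0 : EuclideanSpace ℝ (Fin d) → EuclideanSpace ℝ (Fin d))
    (g : Fin N → EuclideanSpace ℝ (Fin d) → EuclideanSpace ℝ (Fin d))
    (L0 : ℝ) (hL0 : 0 < L0)
    (hlip0 : ∀ θ θ' : EuclideanSpace ℝ (Fin d), ‖g0 θ - g0 θ'‖ ≤ L0 * ‖θ - θ'‖)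
    (hlip : ∀ i, ∀ θ θ' : EuclideanSpace ℝ (Fin d),
      ‖g i θ - g i θ'‖ ≤ L i * ‖θ - θ'‖)
    (θ θhat : EuclideanSpace ℝ (Fin d))
    {Ω : Type*} [MeasurableSpace Ω] (μ : Measure Ω) [IsProbabilityMeasure μ]
    (S : Fin n → Ω → Fin N) (hSm : ∀ k, Measurable (S k))
    (hlaw : ∀ k, ∀ i, μ {ω | S k ω = i} = ENNReal.ofReal (L i / ∑ j, L j))
    (hindep : iIndepFun S μ) :
    ∫ ω, ‖(g0 θ - g0 θhat
        + (n : ℝ)⁻¹ • ∑ k : Fin n,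
            (L (S k ω) / ∑ j, L j)⁻¹ • (g (S k ω) θ - g (S k ω) θhat))
      - ((g0 θ + ∑ i : Fin N, g i θ) - (g0 θhat + ∑ i : Fin N, g i θhat))‖ ^ 2 ∂μ
      ≤ (∑ i : Fin N, L i) ^ 2 / n * ‖θ - θhat‖ ^ 2 := by
  classical
  have hΛpos : (0:ℝ) < ∑ j, L j :=
    Finset.sum_pos (fun i _ => hL i) ⟨⟨0, hN⟩, Finset.mem_univ _⟩
  set Λ : ℝ := ∑ j, L j with hΛdef
  set p : Fin N → ℝ := fun i => L i / Λ with hpdef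
  have hppos : ∀ i, 0 < p i := fun i => div_pos (hL i) hΛpos
  have hpsum : ∑ i, p i = 1 := by
    simp only [hpdef, ← Finset.sum_div, ← hΛdef]
    exact div_self hΛpos.ne'
  set v : Fin N → EuclideanSpace ℝ (Fin d) := fun i => g i θ - g i θhat with hvdef
  set c : Fin N → EuclideanSpace ℝ (Fin d) := fun i => (p i)⁻¹ • v i with hcdef
  set m : EuclideanSpace ℝ (Fin d) := ∑ i, v i with hmdef
  have hm : ∑ i, p i • c i = m := by
    simp [hcdef, smul_smul, mul_inv_cancel₀ (hppos _).ne', hmdef]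
  set D : ℝ := ‖θ - θhat‖ with hDdef
  have hD0 : 0 ≤ D := norm_nonneg _
  have hv : ∀ i, ‖v i‖ ≤ L i * D := fun i => hlip i θ θhat
  have hn' : (0:ℝ) < n := by exact_mod_cast hn
  -- key: integrals of functions of S k
  have key : ∀ (k : Fin n) (h : Fin N → ℝ),
      Integrable (fun ω => h (S k ω)) μ ∧ ∫ ω, h (S k ω) ∂μ = ∑ i, p i * h i := by
    intro k h
    have hrep : (fun ω => h (S k ω))
        = fun ω => ∑ i, Set.indicator ((S k) ⁻¹' {i}) (fun _ => h i) ω := by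
      funext ω
      rw [Finset.sum_eq_single (S k ω)]
      · simp [Set.indicator_apply]
      · intro i _ hne
        simp [Set.indicator_apply, Ne.symm hne]
      · simp
    have hmeas : ∀ i : Fin N, MeasurableSet ((S k) ⁻¹' {i}) :=
      fun i => hSm k (measurableSet_singleton i)
    have hmu : ∀ i : Fin N, (μ ((S k) ⁻¹' {i})).toReal = p i := by
      intro i
      have : (S k) ⁻¹' {i} = {ω | S k ω = i} := by ext ω; simp [Set.mem_preimage]
      rw [this, hlaw k i, ENNReal.toReal_ofReal (le_of_lt (hppos i))]
    constructor
    · rw [hrep]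
      exact integrable_finset_sum _ fun i _ =>
        (integrable_const (h i)).indicator (hmeas i)
    · rw [hrep, integral_finset_sum _ fun i _ =>
        (integrable_const (h i)).indicator (hmeas i)]
      refine Finset.sum_congr rfl fun i _ => ?_
      rw [integral_indicator_const _ (hmeas i), measureReal_def, hmu i, smul_eq_mul, mul_comm]
  -- pointwise rewrite of the integrand
  have hpt : ∀ ω, (g0 θ - g0 θhat
        + (n : ℝ)⁻¹ • ∑ k : Fin n,
            (L (S k ω) / Λ)⁻¹ • (g (S k ω) θ - g (S k ω) θhat))
      - ((g0 θ + ∑ i : Fin N, g i θ) - (g0 θhat + ∑ i : Fin N, g i θhat))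
      = (n : ℝ)⁻¹ • ∑ k : Fin n, (c (S k ω) - m) := by
    intro ω
    have h1 : ∀ k : Fin n, (L (S k ω) / Λ)⁻¹ • (g (S k ω) θ - g (S k ω) θhat)
        = c (S k ω) := by intro k; rfl
    simp_rw [h1]
    have h2 : ∑ k : Fin n, (c (S k ω) - m) = (∑ k : Fin n, c (S k ω)) - (n : ℝ) • m := by
      rw [Finset.sum_sub_distrib, Finset.sum_const, Finset.card_univ, Fintype.card_fin,
        Nat.cast_smul_eq_nsmul]
    rw [h2, smul_sub, smul_smul, inv_mul_cancel₀ hn'.ne', one_smul]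
    have h3 : m = (∑ i : Fin N, g i θ) - ∑ i : Fin N, g i θhat := by
      rw [hmdef, hvdef, Finset.sum_sub_distrib]
    rw [h3]
    abel
  -- zero mean of coordinate functions
  have hz : ∀ t : Fin d, ∑ i, p i * (c i - m) t = 0 := by
    intro t
    have hsub : ∀ i, (c i - m) t = c i t - m t := fun i => rfl
    have hmt : (∑ i, p i • c i) t = m t := by rw [hm]
    rw [apply_sum_smul] at hmt
    calc ∑ i, p i * (c i - m) t = ∑ i, (p i * c i t - p i * m t) := by
          simp_rw [hsub, mul_sub]
      _ = (∑ i, p i * c i t) - (∑ i, p i) * m t := by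
          rw [Finset.sum_sub_distrib, Finset.sum_mul]
      _ = 0 := by rw [hmt, hpsum, one_mul, sub_self]
  -- integrability and vanishing of cross terms
  have hoff : ∀ k j : Fin n, k ≠ j →
      Integrable (fun ω => (inner ℝ (c (S k ω) - m) (c (S j ω) - m) : ℝ)) μ ∧
      ∫ ω, (inner ℝ (c (S k ω) - m) (c (S j ω) - m) : ℝ) ∂μ = 0 := by
    intro k j hkj
    have hcoord : ∀ ω, (inner ℝ (c (S k ω) - m) (c (S j ω) - m) : ℝ)
        = ∑ t, (c (S k ω) - m) t * (c (S j ω) - m) t := by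
      intro ω
      simp [PiLp.inner_apply, RCLike.inner_apply, conj_trivial]
      exact Finset.sum_congr rfl fun _ _ => mul_comm _ _
    have hind : ∀ t : Fin d,
        IndepFun (fun ω => (c (S k ω) - m) t) (fun ω => (c (S j ω) - m) t) μ :=
      fun t => (hindep.indepFun hkj).comp
        (measurable_of_finite (fun i => (c i - m) t))
        (measurable_of_finite (fun i => (c i - m) t))
    have hintt : ∀ (k' : Fin n) (t : Fin d),
        Integrable (fun ω => (c (S k' ω) - m) t) μ :=
      fun k' t => (key k' (fun i => (c i - m) t)).1
    have hmul : ∀ t : Fin d,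
        Integrable (fun ω => (c (S k ω) - m) t * (c (S j ω) - m) t) μ := by
      intro t
      exact (hind t).integrable_mul (hintt k t) (hintt j t)
    constructor
    · rw [show (fun ω => (inner ℝ (c (S k ω) - m) (c (S j ω) - m) : ℝ))
          = fun ω => ∑ t, (c (S k ω) - m) t * (c (S j ω) - m) t from funext hcoord]
      exact integrable_finset_sum _ fun t _ => hmul t
    · rw [show (fun ω => (inner ℝ (c (S k ω) - m) (c (S j ω) - m) : ℝ))
          = fun ω => ∑ t, (c (S k ω) - m) t * (c (S j ω) - m) t from funext hcoord,
        integral_finset_sum _ fun t _ => hmul t]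
      refine Finset.sum_eq_zero fun t _ => ?_
      have := (hind t).integral_fun_mul_eq_mul_integral (hintt k t).aestronglyMeasurable
        (hintt j t).aestronglyMeasurable
      have h1 : ∫ ω, (c (S k ω) - m) t ∂μ = 0 := by
        rw [(key k (fun i => (c i - m) t)).2]; exact hz t
      calc ∫ ω, (c (S k ω) - m) t * (c (S j ω) - m) t ∂μ
          = (∫ ω, (c (S k ω) - m) t ∂μ) * ∫ ω, (c (S j ω) - m) t ∂μ := this
        _ = 0 := by rw [h1, zero_mul]
  -- diagonal terms
  have hdiag : ∀ k : Fin n,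
      Integrable (fun ω => (inner ℝ (c (S k ω) - m) (c (S k ω) - m) : ℝ)) μ ∧
      ∫ ω, (inner ℝ (c (S k ω) - m) (c (S k ω) - m) : ℝ) ∂μ
        = ∑ i, p i * ‖c i - m‖ ^ 2 := by
    intro k
    have h1 := key k (fun i => (inner ℝ (c i - m) (c i - m) : ℝ))
    refine ⟨h1.1, ?_⟩
    rw [h1.2]
    exact Finset.sum_congr rfl fun i _ => by rw [real_inner_self_eq_norm_sq]
  -- variance bound
  have hvar : ∑ i, p i * ‖c i - m‖ ^ 2 ≤ Λ ^ 2 * D ^ 2 := by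
    have h1 : ∑ i, p i * ‖c i - m‖ ^ 2 = (∑ i, p i * ‖c i‖ ^ 2) - ‖m‖ ^ 2 := by
      have hinm : ∑ i, p i * (inner ℝ (c i) m : ℝ) = ‖m‖ ^ 2 := by
        calc ∑ i, p i * (inner ℝ (c i) m : ℝ) = ∑ i, (inner ℝ (p i • c i) m : ℝ) := by
              simp_rw [real_inner_smul_left]
          _ = (inner ℝ (∑ i, p i • c i) m : ℝ) := (sum_inner _ _ _).symm
          _ = ‖m‖ ^ 2 := by rw [hm, real_inner_self_eq_norm_sq]
      calc ∑ i, p i * ‖c i - m‖ ^ 2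
          = ∑ i, (p i * ‖c i‖ ^ 2 - 2 * (p i * (inner ℝ (c i) m : ℝ)) + p i * ‖m‖ ^ 2) := by
            refine Finset.sum_congr rfl fun i _ => ?_
            rw [norm_sub_sq_real]; ring
        _ = (∑ i, p i * ‖c i‖ ^ 2) - 2 * (∑ i, p i * (inner ℝ (c i) m : ℝ))
              + (∑ i, p i) * ‖m‖ ^ 2 := by
            rw [Finset.sum_add_distrib, Finset.sum_sub_distrib, ← Finset.mul_sum,
              ← Finset.sum_mul]
        _ = (∑ i, p i * ‖c i‖ ^ 2) - ‖m‖ ^ 2 := by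
            rw [hinm, hpsum, one_mul]; ring
    rw [h1]
    have h2 : ∑ i, p i * ‖c i‖ ^ 2 ≤ Λ ^ 2 * D ^ 2 := by
      have h3 : ∀ i, p i * ‖c i‖ ^ 2 ≤ Λ * L i * D ^ 2 := by
        intro i
        have hci : ‖c i‖ = (p i)⁻¹ * ‖v i‖ := by
          rw [hcdef]
          rw [norm_smul, Real.norm_eq_abs, abs_of_pos (inv_pos.mpr (hppos i))]
        rw [hci, mul_pow, ← mul_assoc, pow_two, ← mul_assoc,
          mul_inv_cancel₀ (hppos i).ne', one_mul]
        have hvle : ‖v i‖ ^ 2 ≤ (L i * D) ^ 2 := by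
          have := hv i
          nlinarith [norm_nonneg (v i)]
        calc (p i)⁻¹ * ‖v i‖ ^ 2 ≤ (p i)⁻¹ * (L i * D) ^ 2 := by
              exact mul_le_mul_of_nonneg_left hvle (le_of_lt (inv_pos.mpr (hppos i)))
          _ = Λ * L i * D ^ 2 := by
              have hpi : (p i)⁻¹ = Λ / L i := by rw [hpdef]; simp [inv_div]
              rw [hpi]
              field_simp [(hL i).ne']
      calc ∑ i, p i * ‖c i‖ ^ 2 ≤ ∑ i, Λ * L i * D ^ 2 :=
            Finset.sum_le_sum fun i _ => h3 i
        _ = Λ ^ 2 * D ^ 2 := by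
            rw [← Finset.sum_mul, ← Finset.mul_sum, ← hΛdef]; ring
    nlinarith [sq_nonneg ‖m‖]
  -- expansion of the squared norm of the sum
  have hexp : ∀ ω, ‖∑ k : Fin n, (c (S k ω) - m)‖ ^ 2
      = ∑ k : Fin n, ∑ j : Fin n, (inner ℝ (c (S k ω) - m) (c (S j ω) - m) : ℝ) := by
    intro ω
    rw [← real_inner_self_eq_norm_sq, sum_inner]
    exact Finset.sum_congr rfl fun k _ => inner_sum _ _ _
  have hintall : ∀ k j : Fin n,
      Integrable (fun ω => (inner ℝ (c (S k ω) - m) (c (S j ω) - m) : ℝ)) μ := by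
    intro k j
    by_cases hkj : k = j
    · subst hkj; exact (hdiag k).1
    · exact (hoff k j hkj).1
  -- main integral bound
  have hmain : ∫ ω, ‖∑ k : Fin n, (c (S k ω) - m)‖ ^ 2 ∂μ ≤ n * (Λ ^ 2 * D ^ 2) := by
    have : ∫ ω, ‖∑ k : Fin n, (c (S k ω) - m)‖ ^ 2 ∂μ
        = ∑ k : Fin n, ∑ j : Fin n,
            ∫ ω, (inner ℝ (c (S k ω) - m) (c (S j ω) - m) : ℝ) ∂μ := by
      calc ∫ ω, ‖∑ k : Fin n, (c (S k ω) - m)‖ ^ 2 ∂μ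
          = ∫ ω, ∑ k : Fin n, ∑ j : Fin n,
              (inner ℝ (c (S k ω) - m) (c (S j ω) - m) : ℝ) ∂μ := by
            exact integral_congr_ae (Filter.Eventually.of_forall fun ω => hexp ω)
        _ = ∑ k : Fin n, ∫ ω, ∑ j : Fin n,
              (inner ℝ (c (S k ω) - m) (c (S j ω) - m) : ℝ) ∂μ := by
            exact integral_finset_sum _ fun k _ =>
              integrable_finset_sum _ fun j _ => hintall k j
        _ = ∑ k : Fin n, ∑ j : Fin n,
              ∫ ω, (inner ℝ (c (S k ω) - m) (c (S j ω) - m) : ℝ) ∂μ := by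
            exact Finset.sum_congr rfl fun k _ =>
              integral_finset_sum _ fun j _ => hintall k j
    rw [this]
    have hrow : ∀ k : Fin n, ∑ j : Fin n,
        ∫ ω, (inner ℝ (c (S k ω) - m) (c (S j ω) - m) : ℝ) ∂μ
        = ∑ i, p i * ‖c i - m‖ ^ 2 := by
      intro k
      rw [Finset.sum_eq_single k]
      · exact (hdiag k).2
      · intro j _ hjk; exact (hoff k j (Ne.symm hjk)).2
      · simp
    calc ∑ k : Fin n, ∑ j : Fin n,
          ∫ ω, (inner ℝ (c (S k ω) - m) (c (S j ω) - m) : ℝ) ∂μ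
        = ∑ _k : Fin n, ∑ i, p i * ‖c i - m‖ ^ 2 :=
          Finset.sum_congr rfl fun k _ => hrow k
      _ = n * ∑ i, p i * ‖c i - m‖ ^ 2 := by
          rw [Finset.sum_const, Finset.card_univ, Fintype.card_fin, nsmul_eq_mul]
      _ ≤ n * (Λ ^ 2 * D ^ 2) := by
          exact mul_le_mul_of_nonneg_left hvar (le_of_lt hn')
  -- conclusion
  calc ∫ ω, ‖(g0 θ - g0 θhat
        + (n : ℝ)⁻¹ • ∑ k : Fin n,
            (L (S k ω) / Λ)⁻¹ • (g (S k ω) θ - g (S k ω) θhat))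
      - ((g0 θ + ∑ i : Fin N, g i θ) - (g0 θhat + ∑ i : Fin N, g i θhat))‖ ^ 2 ∂μ
      = ∫ ω, ((n:ℝ)⁻¹) ^ 2 * ‖∑ k : Fin n, (c (S k ω) - m)‖ ^ 2 ∂μ := by
        refine integral_congr_ae (Filter.Eventually.of_forall fun ω => ?_)
        dsimp only
        rw [hpt ω, norm_smul, mul_pow]
        congr 1
        rw [Real.norm_eq_abs, abs_of_nonneg (by positivity : (0:ℝ) ≤ (n:ℝ)⁻¹)]
    _ = ((n:ℝ)⁻¹) ^ 2 * ∫ ω, ‖∑ k : Fin n, (c (S k ω) - m)‖ ^ 2 ∂μ :=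
        integral_const_mul _ _
    _ ≤ ((n:ℝ)⁻¹) ^ 2 * (n * (Λ ^ 2 * D ^ 2)) :=
        mul_le_mul_of_nonneg_left hmain (by positivity)
    _ = Λ ^ 2 / n * D ^ 2 := by
        field_simp
end

section
/- For h < 2m/(2M² + m²) with 0 < m ≤ M and n ≥ 1, the quantity A = 1 - √(2h²M²/n + (1 - mh)²) lies in the interval (0, 1). -/
/-- For h < 2m/(2M² + m²) the constant A = 1 - √(2h²M²/n + (1-mh)²) lies in (0,1). -/
theorem stmt5 (m M h : ℝ) (n : ℕ) (hm : 0 < m) (hmM : m ≤ M) (hn : 1 ≤ n)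
    (hh : 0 < h) (hh2 : h < 2 * m / (2 * M ^ 2 + m ^ 2)) :
    1 - Real.sqrt (2 * h ^ 2 * M ^ 2 / n + (1 - m * h) ^ 2) ∈ Set.Ioo (0 : ℝ) 1 := by
  have hM : 0 < M := lt_of_lt_of_le hm hmM
  have hden : 0 < 2 * M ^ 2 + m ^ 2 := by positivity
  have hkey : h * (2 * M ^ 2 + m ^ 2) < 2 * m := (lt_div_iff₀ hden).mp hh2
  have hn1 : (1 : ℝ) ≤ n := by exact_mod_cast hn
  have hdiv : 2 * h ^ 2 * M ^ 2 / n ≤ 2 * h ^ 2 * M ^ 2 :=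
    div_le_self (by positivity) hn1
  constructor
  · have h1 : 2 * h ^ 2 * M ^ 2 / n + (1 - m * h) ^ 2 < 1 := by nlinarith
    have := (Real.sqrt_lt' one_pos).mpr (by nlinarith : 2 * h ^ 2 * M ^ 2 / n + (1 - m * h) ^ 2 < 1 ^ 2)
    linarith
  · have hp : 0 < Real.sqrt (2 * h ^ 2 * M ^ 2 / n + (1 - m * h) ^ 2) := by
      apply Real.sqrt_pos.mpr
      have : 0 < 2 * h ^ 2 * M ^ 2 / n := by positivity
      nlinarith [sq_nonneg (1 - m * h)]
    linarith
end
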